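/- With V₀, W₀, β₀, V, W, α, β, E, φ as above, set I = (1 - αβ)(W) ⊆ V. If g ∈ V and h ∈ W satisfy (1 - α⁻¹)g = (1 - αβ)h, then g + φ(E(h)) ∈ I, where φ : V₀ → V places an element in coordinate 0. -/

import Mathlib

open Finsupp

/-- The shift automorphism `(α f)(n) = f (n-1)` on finitely supported functions `ℤ →₀ M`. -/
noncomputable def sh (M : Type*) [AddCommGroup M] : AddAut (ℤ →₀ M) :=
  (Finsupp.domCongr (Equiv.addRight (1:ℤ)) : (ℤ →₀ M) ≃+ (ℤ →₀ M))

/-- The sum-of-coordinates map `E : (ℤ →₀ M) → M`. -/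
noncomputable def Esum (M : Type*) [AddCommGroup M] : (ℤ →₀ M) →+ M :=
  Finsupp.liftAddHom fun _ => AddMonoidHom.id M

/-- The inclusion `φ : M → (ℤ →₀ M)` at coordinate `0`. -/
noncomputable def phi (M : Type*) [AddCommGroup M] : M →+ (ℤ →₀ M) :=
  Finsupp.singleAddHom (0:ℤ)

/-- The projection `e_i` onto coordinate `i`. -/
noncomputable def eproj (M : Type*) [AddCommGroup M] (i : ℤ) : (ℤ →₀ M) →+ (ℤ →₀ M) :=
  (Finsupp.singleAddHom i).comp (Finsupp.applyAddHom i)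

/-- `q_i = ∑_{j ≤ i} e_j` : restriction to coordinates `≤ i`. -/
noncomputable def qproj (M : Type*) [AddCommGroup M] (i : ℤ) : (ℤ →₀ M) →+ (ℤ →₀ M) :=
  Finsupp.filterAddHom (fun j => j ≤ i)

section
variable {V₀ : Type*} [AddCommGroup V₀] (W₀ : AddSubgroup V₀) (β₀ : W₀ →+ V₀)

/-- The inclusion of `W = ℤ →₀ W₀` into `V = ℤ →₀ V₀`. -/
noncomputable def iota : (ℤ →₀ W₀) →+ (ℤ →₀ V₀) :=
  Finsupp.mapRange.addMonoidHom W₀.subtype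

/-- `β : W → V`, applying `β₀` coordinatewise. -/
noncomputable def betaMap : (ℤ →₀ W₀) →+ (ℤ →₀ V₀) :=
  Finsupp.mapRange.addMonoidHom β₀

/-- `(1 - αβ) : W → V`. -/
noncomputable def oneSubAlphaBeta : (ℤ →₀ W₀) →+ (ℤ →₀ V₀) :=
  iota W₀ - ((sh V₀).toAddMonoidHom.comp (betaMap W₀ β₀))

/-- `I = (1 - αβ)(W) ⊆ V`. -/
noncomputable def Isub : AddSubgroup (ℤ →₀ V₀) :=
  (oneSubAlphaBeta W₀ β₀).range

end

section Aux
variable {M N : Type*} [AddCommGroup M] [AddCommGroup N]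

lemma sh_apply' (f : ℤ →₀ M) (n : ℤ) : sh M f n = f (n - 1) := by
  simp [sh, sub_eq_add_neg]

lemma sh_inv_apply' (f : ℤ →₀ M) (n : ℤ) : (-(sh M)) f n = f (n + 1) := by
  simp [sh, AddAut.neg_def, Finsupp.domCongr_symm]

lemma sh_single' (k : ℤ) (x : M) : sh M (single k x) = single (k+1) x := by
  ext n
  rw [sh_apply', single_apply, single_apply]
  congr 1
  simp only [eq_iff_iff]
  omega

lemma sh_inv_single' (k : ℤ) (x : M) : (-(sh M)) (single k x) = single (k-1) x := by
  ext n
  rw [sh_inv_apply', single_apply, single_apply]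
  congr 1
  simp only [eq_iff_iff]
  omega

lemma Esum_apply' (f : ℤ →₀ M) : Esum M f = f.sum fun _ x => x := by
  rw [Esum, liftAddHom_apply]; rfl

lemma Esum_sh_inv' (f : ℤ →₀ M) : Esum M ((-(sh M)) f) = Esum M f := by
  have h : (sh M) ((-(sh M)) f) = f := by simp
  conv_rhs => rw [← h]
  rw [Esum_apply', Esum_apply', sh, Finsupp.domCongr_apply, Finsupp.sum_equivMapDomain]

lemma Esum_sh' (f : ℤ →₀ M) : Esum M (sh M f) = Esum M f := by
  rw [Esum_apply', Esum_apply', sh, Finsupp.domCongr_apply, Finsupp.sum_equivMapDomain]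

lemma Esum_mapRange' (f : M →+ N) (v : ℤ →₀ M) :
    Esum N (Finsupp.mapRange.addMonoidHom f v) = f (Esum M v) := by
  rw [Esum_apply', Esum_apply', mapRange.addMonoidHom_apply,
    Finsupp.sum_mapRange_index (by simp)]
  exact (map_finsuppSum f v fun _ x => x).symm

lemma shift_inv_zero' (d : ℤ →₀ M) (hd : d = (-(sh M)) d) : d = 0 := by
  by_contra hne
  have hs : d.support.Nonempty := Finsupp.support_nonempty_iff.mpr hne
  set m := d.support.max' hs with hm
  have h1 : d (m + 1) = d m := by
    conv_rhs => rw [hd]; rw [sh_inv_apply']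
  have h2 : m + 1 ∈ d.support := by
    rw [Finsupp.mem_support_iff, h1]
    exact Finsupp.mem_support_iff.mp (d.support.max'_mem hs)
  have := d.support.le_max' _ h2
  omega

noncomputable def uu (k : ℤ) (x : M) : ℤ →₀ M :=
  (∑ n ∈ Finset.Icc 0 k, single n x) - ∑ n ∈ Finset.Icc (k+1) (-1), single n x

lemma sum_single_const_apply (s : Finset ℤ) (x : M) (m : ℤ) :
    (∑ n ∈ s, single n x) m = if m ∈ s then x else 0 := by
  rw [Finset.sum_apply']
  simp only [single_apply]
  rw [Finset.sum_ite_eq' s m (fun _ => x)]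

lemma uu_apply (k : ℤ) (x : M) (m : ℤ) :
    uu k x m = (if 0 ≤ m ∧ m ≤ k then x else 0) - (if k+1 ≤ m ∧ m ≤ -1 then x else 0) := by
  rw [uu, Finsupp.sub_apply, sum_single_const_apply, sum_single_const_apply]
  simp [Finset.mem_Icc]

lemma uu_sub (k : ℤ) (x : M) :
    uu k x - (-(sh M)) (uu k x) = single k x - single (-1) x := by
  ext m
  simp only [Finsupp.sub_apply, sh_inv_apply', uu_apply, single_apply]
  split_ifs <;> first | (exfalso; omega) | abel

end Aux

section Main
variable {V₀ : Type*} [AddCommGroup V₀] (W₀ : AddSubgroup V₀) (β₀ : W₀ →+ V₀)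

lemma F_apply (v : ℤ →₀ W₀) (n : ℤ) :
    oneSubAlphaBeta W₀ β₀ v n = (v n : V₀) - β₀ (v (n-1)) := by
  rw [oneSubAlphaBeta, AddMonoidHom.sub_apply, Finsupp.sub_apply, AddMonoidHom.comp_apply]
  simp [iota, betaMap, sh_apply', mapRange.addMonoidHom_apply, mapRange_apply]

lemma F_single (k : ℤ) (x : W₀) :
    oneSubAlphaBeta W₀ β₀ (single k x) = single k (x : V₀) - single (k+1) (β₀ x) := by
  rw [oneSubAlphaBeta, AddMonoidHom.sub_apply, AddMonoidHom.comp_apply]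
  simp only [iota, betaMap, mapRange.addMonoidHom_apply, mapRange_single,
    AddMonoidHom.coe_coe, AddEquiv.coe_toAddMonoidHom, AddSubgroup.coe_subtype]
  rw [sh_single']

lemma F_comm_sh_inv (v : ℤ →₀ W₀) :
    (-(sh V₀)) (oneSubAlphaBeta W₀ β₀ v) = oneSubAlphaBeta W₀ β₀ ((-(sh W₀)) v) := by
  ext n
  rw [sh_inv_apply', F_apply, F_apply, sh_inv_apply', sh_inv_apply']
  have e1 : n + 1 - 1 = n := by ring
  have e2 : n - 1 + 1 = n := by ring
  rw [e1, e2]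

end Main

/-- If  then . -/
theorem stmt2 {V₀ : Type*} [AddCommGroup V₀] (W₀ : AddSubgroup V₀) (β₀ : W₀ →+ V₀)
    (g : ℤ →₀ V₀) (h : ℤ →₀ W₀)
    (hyp : g - (-(sh V₀)) g = oneSubAlphaBeta W₀ β₀ h) :
    g + phi V₀ ((Esum W₀ h : W₀) : V₀) ∈ Isub W₀ β₀ := by
  classical
  set e : W₀ := Esum W₀ h with he
  -- key : ↑e = β₀ e
  have hkey : ((e : V₀)) = β₀ e := by
    have h0 := congrArg (Esum V₀) hyp
    rw [map_sub, Esum_sh_inv', sub_self] at h0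
    have h1 : oneSubAlphaBeta W₀ β₀ h
        = iota W₀ h - sh V₀ (betaMap W₀ β₀ h) := by
      rw [oneSubAlphaBeta, AddMonoidHom.sub_apply, AddMonoidHom.comp_apply]; rfl
    rw [h1, map_sub, Esum_sh'] at h0
    rw [iota, betaMap, Esum_mapRange', Esum_mapRange'] at h0
    have := sub_eq_zero.mp h0.symm
    simpa using this
  set w : ℤ →₀ W₀ := h.sum fun k x => uu k x with hwdef
  refine ⟨w, ?_⟩
  have hw : w - (-(sh W₀)) w = h - single (-1) e := by
    have h1 : (-(sh W₀)) w = h.sum fun k x => (-(sh W₀)) (uu k x) := by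
      rw [hwdef]
      exact map_finsuppSum ((-(sh W₀)) : (ℤ →₀ W₀) ≃+ (ℤ →₀ W₀)) h _
    rw [hwdef, h1, ← Finsupp.sum_sub]
    have h2 : (h.sum fun k x => uu k x - (-(sh W₀)) (uu k x))
        = h.sum fun k x => single k x - single (-1) x :=
      Finsupp.sum_congr fun k _ => uu_sub k _
    rw [h2, Finsupp.sum_sub, Finsupp.sum_single]
    congr 1
    rw [he, Esum_apply']
    have := map_finsuppSum (singleAddHom (-1) : W₀ →+ (ℤ →₀ W₀)) h fun _ x => x
    simpa [singleAddHom_apply] using this.symm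
  have hFw : oneSubAlphaBeta W₀ β₀ w - (-(sh V₀)) (oneSubAlphaBeta W₀ β₀ w)
      = oneSubAlphaBeta W₀ β₀ h - (single (-1) (e : V₀) - single 0 (β₀ e)) := by
    rw [F_comm_sh_inv, ← map_sub, hw, map_sub, F_single]
    norm_num
  set d := g + phi V₀ (e : V₀) - oneSubAlphaBeta W₀ β₀ w with hd
  have hphi : phi V₀ (e : V₀) = single 0 (e : V₀) := rfl
  have hdinv : d - (-(sh V₀)) d = 0 := by
    rw [hd]
    rw [map_sub, map_add]
    have rearr : g + phi V₀ ↑e - oneSubAlphaBeta W₀ β₀ w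
        - ((-(sh V₀)) g + (-(sh V₀)) (phi V₀ ↑e) - (-(sh V₀)) (oneSubAlphaBeta W₀ β₀ w))
        = (g - (-(sh V₀)) g) + (phi V₀ ↑e - (-(sh V₀)) (phi V₀ ↑e))
          - (oneSubAlphaBeta W₀ β₀ w - (-(sh V₀)) (oneSubAlphaBeta W₀ β₀ w)) := by
      abel
    rw [rearr, hyp, hFw, hphi, sh_inv_single', ← hkey]
    norm_num
  have hd0 : d = 0 := shift_inv_zero' d (by
    have := sub_eq_zero.mp hdinv
    exact this)
  rw [hd] at hd0
  have := sub_eq_zero.mp hd0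
  exact this.symm
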